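/- arXiv:0903.2278 — 3 statements merged into one kernel-verified Lean document; each statement's English description precedes it below -/
import Mathlib

section
/- Let S be a finite set of states, and suppose to each state x we assign a weight w_x = ∏_i (β_i χ_i / ρ_i)^{x_i} > 0, where x_i ∈ ℕ is the money of agent i in state x and β_i, χ_i, ρ_i > 0. Suppose the transition matrix S satisfies: for any two states x, y that differ only in that agent i has one more dollar in x and agent j has one more dollar in y, there is p ≥ 0 with S_{xy} = ρ_i β_j χ_j p and S_{yx} = ρ_j β_i χ_i p, and S_{xy} = S_{yx} = 0 for non-adjacent distinct states. Then π_x = w_x / (∑_y w_y) satisfies detailed balance π_x S_{xy} = π_y S_{yx} for all x, y, and hence π is a stationary distribution of the chain. -/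
/-- States are allocations of money to `n` agents (encoded by `money : V → Fin n → ℕ` on a
finite state space `V`). Each state `x` is weighted by `w x = ∏ i, (β i χ i / ρ i)^(x i)`.
If the transition matrix `S` satisfies: whenever `x` and `y` differ only in that agent `i`
has one more dollar in `x` and agent `j` has one more dollar in `y`, there is `p ≥ 0` with
`S x y = ρ i β j χ j p` and `S y x = ρ j β i χ i p`; and `S x y = 0` for distinct
non-adjacent states; then `π x = w x / ∑ y, w y` satisfies detailed balance
`π x * S x y = π y * S y x`, hence `π` is a stationary distribution of the chain. -/
theorem stmt_6 {V : Type*} [Fintype V] [Nonempty V] (n : ℕ)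
    (money : V → Fin n → ℕ) (β χ ρ : Fin n → ℝ)
    (hβ : ∀ i, 0 < β i) (hχ : ∀ i, 0 < χ i) (hρ : ∀ i, 0 < ρ i)
    (w : V → ℝ) (hw : w = fun x => ∏ i, (β i * χ i / ρ i) ^ (money x i))
    (Adj : V → V → Fin n → Fin n → Prop)
    (hAdj : Adj = fun x y i j => i ≠ j ∧ money x i = money y i + 1 ∧
      money y j = money x j + 1 ∧ ∀ l, l ≠ i → l ≠ j → money x l = money y l)
    (S : V → V → ℝ)
    (hSnonneg : ∀ x y, 0 ≤ S x y)
    (hSrow : ∀ x, ∑ y, S x y = 1)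
    (hStrans : ∀ x y i j, Adj x y i j →
      ∃ p, 0 ≤ p ∧ S x y = ρ i * β j * χ j * p ∧ S y x = ρ j * β i * χ i * p)
    (hSzero : ∀ x y, x ≠ y → (¬ ∃ i j, Adj x y i j) → S x y = 0)
    (π : V → ℝ) (hπ : π = fun x => w x / ∑ y, w y) :
    (∀ x y, π x * S x y = π y * S y x) ∧
    (∀ y, ∑ x, π x * S x y = π y) := by
  subst hw hAdj hπ
  set c : Fin n → ℝ := fun i => β i * χ i / ρ i with hc
  have key : ∀ x y, (∏ l, c l ^ money x l) * S x y = (∏ l, c l ^ money y l) * S y x := by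
    intro x y
    by_cases hxy : x = y
    · subst hxy; rfl
    by_cases h : ∃ i j, (i ≠ j ∧ money x i = money y i + 1 ∧
        money y j = money x j + 1 ∧ ∀ l, l ≠ i → l ≠ j → money x l = money y l)
    · obtain ⟨i, j, hij, hxi, hyj, hrest⟩ := h
      obtain ⟨p, hp, hS1, hS2⟩ := hStrans x y i j ⟨hij, hxi, hyj, hrest⟩
      set m : Fin n → ℕ := fun l => min (money x l) (money y l) with hm
      have hPρ : 0 < ∏ l, ρ l ^ m l :=
        Finset.prod_pos fun l _ => pow_pos (hρ l) _
      have hx : ∀ l, money x l = m l + if l = i then 1 else 0 := by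
        intro l
        rcases eq_or_ne l i with h | h
        · subst h; rw [if_pos rfl]; simp only [hm]; omega
        rcases eq_or_ne l j with h2 | h2
        · subst h2; rw [if_neg h]; simp only [hm]; omega
        · rw [if_neg h]; have he := hrest l h h2; simp only [hm]; omega
      have hy : ∀ l, money y l = m l + if l = j then 1 else 0 := by
        intro l
        rcases eq_or_ne l j with h | h
        · subst h; rw [if_pos rfl]; simp only [hm]; omega
        rcases eq_or_ne l i with h2 | h2
        · subst h2; rw [if_neg h]; simp only [hm]; omega
        · rw [if_neg h]; have he := hrest l h2 h; simp only [hm]; omega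
      have prodsplit : ∀ (k : Fin n), (∏ l, c l ^ (m l + if l = k then 1 else 0))
          = (∏ l, c l ^ m l) * c k := by
        intro k
        rw [show (∏ l, c l ^ (m l + if l = k then 1 else 0))
            = ∏ l, (c l ^ m l * if l = k then c l else 1) by
          apply Finset.prod_congr rfl
          intro l _
          rw [pow_add]
          by_cases hlk : l = k <;> simp [hlk]]
        rw [Finset.prod_mul_distrib, Finset.prod_ite_eq' Finset.univ k c]
        simp
      have hwx : (∏ l, c l ^ money x l) = (∏ l, c l ^ m l) * c i := by
        rw [← prodsplit i]; exact Finset.prod_congr rfl fun l _ => by rw [hx l]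
      have hwy : (∏ l, c l ^ money y l) = (∏ l, c l ^ m l) * c j := by
        rw [← prodsplit j]; exact Finset.prod_congr rfl fun l _ => by rw [hy l]
      rw [hwx, hwy, hS1, hS2, hc]
      have hρi := (hρ i).ne'
      have hρj := (hρ j).ne'
      field_simp
    · have h1 : S x y = 0 := hSzero x y hxy h
      have h2 : S y x = 0 := by
        apply hSzero y x (Ne.symm hxy)
        rintro ⟨i, j, hij, hyi, hxj, hrest⟩
        exact h ⟨j, i, Ne.symm hij, hxj, hyi, fun l hlj hli => (hrest l hli hlj).symm⟩
      simp [h1, h2]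
  have hcpos : ∀ l, 0 < c l := fun l => by
    exact div_pos (mul_pos (hβ l) (hχ l)) (hρ l)
  have hwpos : ∀ x, 0 < ∏ l, c l ^ money x l := fun x =>
    Finset.prod_pos fun l _ => pow_pos (hcpos l) _
  have hTpos : 0 < ∑ y, ∏ l, c l ^ money y l :=
    Finset.sum_pos (fun y _ => hwpos y) Finset.univ_nonempty
  have db : ∀ x y, ((∏ l, c l ^ money x l) / (∑ z, ∏ l, c l ^ money z l)) * S x y
      = ((∏ l, c l ^ money y l) / (∑ z, ∏ l, c l ^ money z l)) * S y x := by
    intro x y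
    rw [div_mul_eq_mul_div, div_mul_eq_mul_div, key x y]
  refine ⟨db, fun y => ?_⟩
  calc ∑ x, ((∏ l, c l ^ money x l) / (∑ z, ∏ l, c l ^ money z l)) * S x y
      = ∑ x, ((∏ l, c l ^ money y l) / (∑ z, ∏ l, c l ^ money z l)) * S y x := by
        exact Finset.sum_congr rfl fun x _ => db x y
    _ = ((∏ l, c l ^ money y l) / (∑ z, ∏ l, c l ^ money z l)) * ∑ x, S y x := by
        rw [Finset.mul_sum]
    _ = _ := by rw [hSrow y, mul_one]
end

section
/- Let T be a finite set of types with weights ω_t > 0 and thresholds k_t ∈ ℕ, and let q be the probability distribution on pairs (t,i) with 0 ≤ i ≤ k_t defined by q^t_i = ω_t^i / (∑_{t'} ∑_{j=0}^{k_{t'}} ω_{t'}^j). Among all probability distributions d on pairs (t,i) satisfying ∑_{i=0}^{k_t} d^t_i = f_t for each t (where f_t > 0, ∑_t f_t = 1) and ∑_t ∑_i i·d^t_i = m, the relative entropy D(d||q) = ∑ d^t_i log(d^t_i/q^t_i) is minimized at the distribution d^t_i = f_t λ^i q^t_i / (∑_{j=0}^{k_t} λ^j q^t_j), for the (unique) λ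 > 0 making the mean-money constraint hold, provided such a λ exists. -/
/-- Gibbs-type pointwise inequality. -/
lemma key_ineq (x y z : ℝ) (hx : 0 ≤ x) (hy : 0 < y) (hz : 0 < z) :
    x * Real.log (y / z) + (x - y) ≤ x * Real.log (x / z) := by
  rcases eq_or_lt_of_le hx with h | h
  · simp [← h]; linarith
  · have hlog : Real.log (y / x) ≤ y / x - 1 :=
      Real.log_le_sub_one_of_pos (by positivity)
    have h1 : Real.log (x / z) = Real.log (x / y) + Real.log (y / z) := by
      rw [← Real.log_mul (by positivity) (by positivity)]
      congr 1
      field_simp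
    have h2 : Real.log (x / y) = - Real.log (y / x) := by
      rw [← Real.log_inv]
      congr 1
      field_simp
    have h3 : x - y ≤ x * Real.log (x / y) := by
      rw [h2]
      have := mul_le_mul_of_nonneg_left hlog (le_of_lt h)
      have hxy : x * (y / x - 1) = y - x := by field_simp
      nlinarith
    nlinarith [h3, h1]

/-- Among probability distributions `d` on pairs `(t, i)` with `0 ≤ i ≤ k t` satisfying
`∑_{i ≤ k t} d t i = f t` for each type `t` and mean-money constraint
`∑_t ∑_i i · d t i = m`, the relative entropy `D(d‖q) = ∑ d t i log (d t i / q t i)`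
relative to `q t i = ω t ^ i / (∑_{t'} ∑_{j ≤ k t'} ω t' ^ j)` is minimized at
`d* t i = f t λ^i q t i / (∑_{j ≤ k t} λ^j q t j)`, for `λ > 0` making the mean-money
constraint hold. -/
theorem stmt_8 {T : Type*} [Fintype T] (ω : T → ℝ) (hω : ∀ t, 0 < ω t)
    (k : T → ℕ) (f : T → ℝ) (hf : ∀ t, 0 < f t) (hfsum : ∑ t, f t = 1)
    (m : ℝ) (q : T → ℕ → ℝ)
    (hq : q = fun t i => ω t ^ i / ∑ t', ∑ j ∈ Finset.range (k t' + 1), ω t' ^ j)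
    (lam : ℝ) (hlam : 0 < lam)
    (dstar : T → ℕ → ℝ)
    (hdstar : dstar = fun t i =>
      f t * lam ^ i * q t i / ∑ j ∈ Finset.range (k t + 1), lam ^ j * q t j)
    (hmean : ∑ t, ∑ i ∈ Finset.range (k t + 1), (i : ℝ) * dstar t i = m)
    (d : T → ℕ → ℝ)
    (hdnonneg : ∀ t i, 0 ≤ d t i)
    (hdf : ∀ t, ∑ i ∈ Finset.range (k t + 1), d t i = f t)
    (hdm : ∑ t, ∑ i ∈ Finset.range (k t + 1), (i : ℝ) * d t i = m) :
    ∑ t, ∑ i ∈ Finset.range (k t + 1), dstar t i * Real.log (dstar t i / q t i) ≤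
    ∑ t, ∑ i ∈ Finset.range (k t + 1), d t i * Real.log (d t i / q t i) := by
  rcases isEmpty_or_nonempty T with hT | hT
  · simp
  -- positivity of q
  have hqpos : ∀ t i, 0 < q t i := by
    intro t i
    simp only [hq]
    have hden : 0 < ∑ t', ∑ j ∈ Finset.range (k t' + 1), ω t' ^ j := by
      apply Finset.sum_pos
      · intro t' _
        apply Finset.sum_pos
        · intro j _; exact pow_pos (hω t') j
        · exact Finset.nonempty_range_iff.mpr (Nat.succ_ne_zero _)
      · exact Finset.univ_nonempty
    exact div_pos (pow_pos (hω t) i) hden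
  set Z : T → ℝ := fun t => ∑ j ∈ Finset.range (k t + 1), lam ^ j * q t j with hZdef
  have hZpos : ∀ t, 0 < Z t := by
    intro t
    apply Finset.sum_pos
    · intro j _
      have := hqpos t j
      positivity
    · exact Finset.nonempty_range_iff.mpr (Nat.succ_ne_zero _)
  have hdspos : ∀ t i, 0 < dstar t i := by
    intro t i
    simp only [hdstar]
    have := hqpos t i
    have := hZpos t
    have := hf t
    positivity
  -- sum of dstar over each t is f t
  have hdsf : ∀ t, ∑ i ∈ Finset.range (k t + 1), dstar t i = f t := by
    intro t
    simp only [hdstar]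
    rw [← Finset.sum_div]
    have : ∑ i ∈ Finset.range (k t + 1), f t * lam ^ i * q t i
        = f t * Z t := by
      rw [hZdef, Finset.mul_sum]
      apply Finset.sum_congr rfl
      intro i _; ring
    rw [this, mul_div_assoc, div_self (hZpos t).ne', mul_one]
  -- the log of dstar/q is affine in i
  set A : T → ℝ := fun t => Real.log (f t) - Real.log (Z t) with hA
  set B : ℝ := Real.log lam with hB
  have hc : ∀ t i, Real.log (dstar t i / q t i) = A t + (i : ℝ) * B := by
    intro t i
    have hratio : dstar t i / q t i = f t * lam ^ i / Z t := by
      simp only [hdstar]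
      have h1 := (hqpos t i).ne'
      have h2 := (hZpos t).ne'
      change f t * lam ^ i * q t i / Z t / q t i = f t * lam ^ i / Z t
      field_simp
    rw [hratio, Real.log_div (by have := hf t; positivity) (hZpos t).ne',
      Real.log_mul (hf t).ne' (by positivity), Real.log_pow, hA, hB]
    push_cast
    ring
  -- generic computation of the linear functional
  have stepA : ∀ g : T → ℕ → ℝ,
      (∀ t, ∑ i ∈ Finset.range (k t + 1), g t i = f t) →
      (∑ t, ∑ i ∈ Finset.range (k t + 1), (i : ℝ) * g t i = m) →
      ∑ t, ∑ i ∈ Finset.range (k t + 1), g t i * (A t + (i : ℝ) * B)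
        = (∑ t, A t * f t) + B * m := by
    intro g hg hm
    have : ∀ t, ∑ i ∈ Finset.range (k t + 1), g t i * (A t + (i : ℝ) * B)
        = A t * f t + B * ∑ i ∈ Finset.range (k t + 1), (i : ℝ) * g t i := by
      intro t
      rw [Finset.mul_sum, ← hg t, Finset.mul_sum, ← Finset.sum_add_distrib]
      apply Finset.sum_congr rfl
      intro i _; ring
    rw [Finset.sum_congr rfl fun t _ => this t, Finset.sum_add_distrib,
      ← Finset.mul_sum, hm]
  -- LHS equals the linear functional of dstar
  have hL : ∑ t, ∑ i ∈ Finset.range (k t + 1), dstar t i * Real.log (dstar t i / q t i)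
      = (∑ t, A t * f t) + B * m := by
    rw [← stepA dstar hdsf hmean]
    apply Finset.sum_congr rfl; intro t _
    apply Finset.sum_congr rfl; intro i _
    rw [hc t i]
  rw [hL]
  -- RHS is at least the linear functional of d
  have hpt : ∀ t, ∀ i ∈ Finset.range (k t + 1),
      d t i * (A t + (i : ℝ) * B) + (d t i - dstar t i)
        ≤ d t i * Real.log (d t i / q t i) := by
    intro t i _
    have := key_ineq (d t i) (dstar t i) (q t i) (hdnonneg t i) (hdspos t i) (hqpos t i)
    rw [hc t i] at this
    exact this
  have hsum : ∑ t, ∑ i ∈ Finset.range (k t + 1),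
      (d t i * (A t + (i : ℝ) * B) + (d t i - dstar t i))
        ≤ ∑ t, ∑ i ∈ Finset.range (k t + 1), d t i * Real.log (d t i / q t i) := by
    apply Finset.sum_le_sum
    intro t _
    exact Finset.sum_le_sum (hpt t)
  have hzero : ∑ t, ∑ i ∈ Finset.range (k t + 1),
      (d t i * (A t + (i : ℝ) * B) + (d t i - dstar t i))
      = (∑ t, A t * f t) + B * m := by
    have h1 : ∀ t, ∑ i ∈ Finset.range (k t + 1),
        (d t i * (A t + (i : ℝ) * B) + (d t i - dstar t i))
        = (∑ i ∈ Finset.range (k t + 1), d t i * (A t + (i : ℝ) * B))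
          + ((∑ i ∈ Finset.range (k t + 1), d t i)
            - ∑ i ∈ Finset.range (k t + 1), dstar t i) := by
      intro t
      rw [Finset.sum_add_distrib, Finset.sum_sub_distrib]
    rw [Finset.sum_congr rfl fun t _ => h1 t]
    have h2 : ∀ t, ((∑ i ∈ Finset.range (k t + 1), d t i)
        - ∑ i ∈ Finset.range (k t + 1), dstar t i) = 0 := by
      intro t; rw [hdf t, hdsf t]; ring
    rw [Finset.sum_add_distrib, Finset.sum_congr rfl fun t _ => h2 t]
    simp [stepA d hdf hdm]
  rw [← hzero]
  exact hsum
end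

section
/- Fix an integer k ≥ 1 and ω > 0. Define λ(m) for m ∈ (0,k) as the unique λ > 0 such that the distribution on {0,...,k} proportional to (λω)^i has mean m, and define λ'(m) analogously with threshold k+1 for m ∈ (0, k+1). Then for every m ∈ (0,k), λ'(m) < λ(m): raising the threshold while keeping the average money fixed strictly decreases the multiplier λ. -/
open Finset

private lemma termNonneg {a b : ℝ} (ha : 0 < a) (hab : a < b) (i j : ℕ) :
    0 ≤ ((i : ℝ) - j) * (b ^ i * a ^ j - b ^ j * a ^ i) := by
  have hb : 0 < b := ha.trans hab
  rcases le_total j i with h | h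
  · have h1 : a ^ (i - j) ≤ b ^ (i - j) := pow_le_pow_left₀ ha.le hab.le _
    have h2 : b ^ j * a ^ i ≤ b ^ i * a ^ j := by
      have : b ^ j * (a ^ j * a ^ (i - j)) ≤ b ^ j * (a ^ j * b ^ (i - j)) := by
        apply mul_le_mul_of_nonneg_left _ (by positivity)
        exact mul_le_mul_of_nonneg_left h1 (by positivity)
      calc b ^ j * a ^ i = b ^ j * (a ^ j * a ^ (i - j)) := by
            rw [← pow_add, Nat.add_sub_cancel' h]
        _ ≤ b ^ j * (a ^ j * b ^ (i - j)) := this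
        _ = b ^ i * a ^ j := by rw [mul_comm (a ^ j), ← mul_assoc, ← pow_add,
            Nat.add_sub_cancel' h]
    have hij : (0:ℝ) ≤ (i : ℝ) - j := by
      have := Nat.cast_le (α := ℝ).mpr h; linarith
    exact mul_nonneg hij (by linarith)
  · have h1 : a ^ (j - i) ≤ b ^ (j - i) := pow_le_pow_left₀ ha.le hab.le _
    have h2 : b ^ i * a ^ j ≤ b ^ j * a ^ i := by
      have : b ^ i * (a ^ i * a ^ (j - i)) ≤ b ^ i * (a ^ i * b ^ (j - i)) := by
        apply mul_le_mul_of_nonneg_left _ (by positivity)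
        exact mul_le_mul_of_nonneg_left h1 (by positivity)
      calc b ^ i * a ^ j = b ^ i * (a ^ i * a ^ (j - i)) := by
            rw [← pow_add, Nat.add_sub_cancel' h]
        _ ≤ b ^ i * (a ^ i * b ^ (j - i)) := this
        _ = b ^ j * a ^ i := by rw [mul_comm (a ^ i), ← mul_assoc, ← pow_add,
            Nat.add_sub_cancel' h]
    have hij : ((i : ℝ) - j) ≤ 0 := by
      have := Nat.cast_le (α := ℝ).mpr h; linarith
    nlinarith [mul_nonneg (neg_nonneg.mpr hij) (sub_nonneg.mpr h2)]

/-- strict monotonicity of the mean in the parameter. -/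
private lemma mean_mono {a b : ℝ} (ha : 0 < a) (hab : a < b) {n : ℕ} (hn : 1 ≤ n) :
    (∑ i ∈ range (n+1), (i:ℝ) * a ^ i) * (∑ i ∈ range (n+1), b ^ i)
      < (∑ i ∈ range (n+1), (i:ℝ) * b ^ i) * (∑ i ∈ range (n+1), a ^ i) := by
  have hb : 0 < b := ha.trans hab
  set r := range (n+1)
  have key : 0 < ∑ i ∈ r, ∑ j ∈ r, ((i:ℝ) - j) * (b ^ i * a ^ j - b ^ j * a ^ i) := by
    apply Finset.sum_pos'
    · intro i _
      exact Finset.sum_nonneg fun j _ => termNonneg ha hab i j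
    · refine ⟨1, Finset.mem_range.mpr (by omega), ?_⟩
      apply Finset.sum_pos'
      · intro j _; exact termNonneg ha hab 1 j
      · refine ⟨0, by simp [r], ?_⟩
        simp only [Nat.cast_one, Nat.cast_zero, pow_zero, pow_one]
        nlinarith
  have e1 : ∑ i ∈ r, ∑ j ∈ r, ((i:ℝ) - j) * (b ^ i * a ^ j - b ^ j * a ^ i)
      = 2 * ((∑ i ∈ r, (i:ℝ) * b ^ i) * (∑ i ∈ r, a ^ i)
        - (∑ i ∈ r, (i:ℝ) * a ^ i) * (∑ i ∈ r, b ^ i)) := by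
    have swap : ∑ i ∈ r, ∑ j ∈ r, ((j:ℝ)) * (b ^ j * a ^ i)
        = ∑ i ∈ r, ∑ j ∈ r, ((i:ℝ)) * (b ^ i * a ^ j) := Finset.sum_comm
    have swap2 : ∑ i ∈ r, ∑ j ∈ r, ((j:ℝ)) * (b ^ i * a ^ j)
        = ∑ i ∈ r, ∑ j ∈ r, ((i:ℝ)) * (b ^ j * a ^ i) := Finset.sum_comm
    simp only [sub_mul, mul_sub, Finset.sum_sub_distrib]
    rw [swap, swap2]
    have hba : (∑ i ∈ r, (i:ℝ) * b ^ i) * (∑ i ∈ r, a ^ i)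
        = ∑ i ∈ r, ∑ j ∈ r, (i:ℝ) * (b ^ i * a ^ j) := by
      rw [Finset.sum_mul_sum]; congr 1; ext i; congr 1; ext j; ring
    have hab' : (∑ i ∈ r, (i:ℝ) * a ^ i) * (∑ i ∈ r, b ^ i)
        = ∑ i ∈ r, ∑ j ∈ r, (i:ℝ) * (b ^ j * a ^ i) := by
      rw [Finset.sum_mul_sum]; congr 1; ext i; congr 1; ext j; ring
    rw [hba, hab']; ring
  rw [e1] at key
  linarith

/-- Raising the threshold from `k` to `k+1` while keeping the average money `m` fixed
strictly decreases the Lagrange multiplier: if `λ₁ > 0` makes the distribution on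
`{0,...,k}` proportional to `(λ₁ω)^i` have mean `m ∈ (0,k)`, and `λ₂ > 0` makes the
distribution on `{0,...,k+1}` proportional to `(λ₂ω)^i` have mean `m`, then `λ₂ < λ₁`. -/
theorem stmt_11 (ω : ℝ) (hω : 0 < ω) (k : ℕ) (hk : 1 ≤ k)
    (m : ℝ) (hm : m ∈ Set.Ioo (0 : ℝ) (k : ℝ))
    (M : ℝ → ℕ → ℝ)
    (hM : M = fun lam k => (∑ i ∈ Finset.range (k + 1), (i : ℝ) * (lam * ω) ^ i) /
      (∑ i ∈ Finset.range (k + 1), (lam * ω) ^ i))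
    (lam₁ lam₂ : ℝ) (h₁ : 0 < lam₁) (h₂ : 0 < lam₂)
    (hM₁ : M lam₁ k = m) (hM₂ : M lam₂ (k + 1) = m) :
    lam₂ < lam₁ := by
  subst hM
  by_contra hcon
  push_neg at hcon  -- lam₁ ≤ lam₂
  set x₁ := lam₁ * ω with hx₁
  set x₂ := lam₂ * ω with hx₂
  have hx₁pos : 0 < x₁ := mul_pos h₁ hω
  have hx₂pos : 0 < x₂ := mul_pos h₂ hω
  have hx12 : x₁ ≤ x₂ := mul_le_mul_of_nonneg_right hcon hω.le
  have Spos : ∀ (x : ℝ), 0 < x → ∀ n : ℕ, 0 < ∑ i ∈ range (n+1), x ^ i := by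
    intro x hx n
    apply Finset.sum_pos (fun i _ => pow_pos hx i) ⟨0, by simp⟩
  -- step 1: mean at (x₁, k) < mean at (x₁, k+1)
  have step1 : (∑ i ∈ range (k+1), (i:ℝ) * x₁ ^ i) / (∑ i ∈ range (k+1), x₁ ^ i)
      < (∑ i ∈ range (k+2), (i:ℝ) * x₁ ^ i) / (∑ i ∈ range (k+2), x₁ ^ i) := by
    rw [div_lt_div_iff₀ (Spos _ hx₁pos k) (by exact Spos _ hx₁pos (k+1))]
    have eT : ∑ i ∈ range (k+2), (i:ℝ) * x₁ ^ i
        = (∑ i ∈ range (k+1), (i:ℝ) * x₁ ^ i) + ((k:ℝ)+1) * x₁ ^ (k+1) := by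
      rw [show k + 2 = (k+1) + 1 from rfl, Finset.sum_range_succ]; push_cast; ring
    have eS : ∑ i ∈ range (k+2), x₁ ^ i
        = (∑ i ∈ range (k+1), x₁ ^ i) + x₁ ^ (k+1) := by
      rw [show k + 2 = (k+1) + 1 from rfl, Finset.sum_range_succ]
    rw [eT, eS]
    have hT : (∑ i ∈ range (k+1), (i:ℝ) * x₁ ^ i) ≤ (k:ℝ) * ∑ i ∈ range (k+1), x₁ ^ i := by
      rw [Finset.mul_sum]
      apply Finset.sum_le_sum
      intro i hi
      have : (i:ℝ) ≤ (k:ℝ) := by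
        exact_mod_cast Nat.lt_succ_iff.mp (Finset.mem_range.mp hi)
      exact mul_le_mul_of_nonneg_right this (pow_pos hx₁pos i).le |>.trans_eq rfl
    have hS := Spos _ hx₁pos k
    have hp : 0 < x₁ ^ (k+1) := pow_pos hx₁pos _
    nlinarith
  -- step 2: mean at (x₁, k+1) ≤ mean at (x₂, k+1)
  have step2 : (∑ i ∈ range (k+2), (i:ℝ) * x₁ ^ i) / (∑ i ∈ range (k+2), x₁ ^ i)
      ≤ (∑ i ∈ range (k+2), (i:ℝ) * x₂ ^ i) / (∑ i ∈ range (k+2), x₂ ^ i) := by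
    rcases eq_or_lt_of_le hx12 with h | h
    · rw [h]
    · rw [div_le_div_iff₀ (Spos _ hx₁pos (k+1)) (Spos _ hx₂pos (k+1))]
      have := mean_mono hx₁pos h (n := k+1) (by omega)
      linarith
  simp only [hx₁.symm, hx₂.symm] at *
  have e1 : (∑ i ∈ range (k+1), (i:ℝ) * x₁ ^ i) / (∑ i ∈ range (k+1), x₁ ^ i) = m := hM₁
  have e2 : (∑ i ∈ range (k+2), (i:ℝ) * x₂ ^ i) / (∑ i ∈ range (k+2), x₂ ^ i) = m := by
    have := hM₂; simpa [show k + 1 + 1 = k + 2 from rfl] using this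
  rw [e1] at step1
  rw [e2] at step2
  linarith
end
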